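/- Every extremal element of sp(V,B), where V is a finite-dimensional symplectic space over an algebraically closed field F of characteristic not 2, is of the form u(y) : v ↦ B(y,v)·y for some nonzero y ∈ V, up to a nonzero scalar multiple. -/

import Mathlib

/-- every extremal element of `sp(V,B)` over an algebraically closed
field of characteristic not 2 is, up to a nonzero scalar, of the form
`u(y) : v ↦ B(y,v)·y` for some nonzero `y`. -/
theorem extremal_in_sp_is_transvection {F V : Type*} [Field F] [IsAlgClosed F]
    [AddCommGroup V] [Module F V] [FiniteDimensional F V]
    (h2 : (2 : F) ≠ 0) (hdim : 2 ≤ Module.finrank F V)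
    (B : LinearMap.BilinForm F V)
    (hBalt : ∀ v : V, B v v = 0) (hBnd : B.Nondegenerate)
    (z : Module.End F V) (hz0 : z ≠ 0)
    (hzsp : ∀ v w : V, B (z v) w + B v (z w) = 0)
    (hz : ∀ A : Module.End F V, (∀ v w : V, B (A v) w + B v (A w) = 0) →
      ∃ c : F, ⁅z, ⁅z, A⁆⁆ = c • z) :
    ∃ (y : V) (c : F), y ≠ 0 ∧ c ≠ 0 ∧ z = c • (B y).smulRight y := by
  -- skew-symmetry of B
  have hskew : ∀ v w : V, B v w = - B w v := by
    intro v w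
    have h := hBalt (v + w)
    simp only [map_add, LinearMap.add_apply, hBalt] at h
    linear_combination h
  have hzB : ∀ v w : V, B v (z w) = - B (z v) w := by
    intro v w
    linear_combination hzsp v w
  have hBex : ∀ x : V, x ≠ 0 → ∃ v, B x v ≠ 0 := by
    intro x hx
    by_contra h
    push_neg at h
    exact hx (hBnd.1 x h)
  -- The key identity derived from extremality with A = u(y)
  have key : ∀ y v : V, B y v • z (z y) + (2 * B (z y) v) • z y
      + B (z (z y)) v • y = (2 * B (z y) y) • z v := by
    intro y v
    obtain ⟨c, hc⟩ := hz ((B y).smulRight y) (by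
      intro a b
      simp only [LinearMap.smulRight_apply, map_smul, LinearMap.smul_apply, smul_eq_mul]
      rw [hskew a y]
      ring)
    have hcw : ∀ w : V, B y w • z (z y) + (2 * B (z y) w) • z y
        + B (z (z y)) w • y = c • z w := by
      intro w
      have h := LinearMap.congr_fun hc w
      simp only [Ring.lie_def, LinearMap.sub_apply, Module.End.mul_apply,
        LinearMap.smulRight_apply, map_smul, map_sub, map_neg, neg_smul, smul_neg,
        LinearMap.smul_apply, smul_eq_mul] at h
      rw [hzB y w, hzB y (z w), hzB (z y) w] at h
      linear_combination (norm := module) h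
    by_cases hzy : z y = 0
    · simp [hzy]
    · have hcy := hcw y
      have hB1 : B (z (z y)) y = 0 := by
        have h := hzsp (z y) y
        rw [hBalt (z y)] at h
        linear_combination h
      rw [hBalt y, hB1, zero_smul, zero_smul, zero_add, add_zero] at hcy
      -- hcy : (2 * B (z y) y) • z y = c • z y
      have hceq : c = 2 * B (z y) y := by
        have h0 : (c - 2 * B (z y) y) • z y = 0 := by
          rw [sub_smul, hcy, sub_self]
        rcases smul_eq_zero.mp h0 with h | h
        · exact sub_eq_zero.mp h
        · exact absurd h hzy
      rw [← hceq]
      exact hcw v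
  by_cases hz2 : ∀ x, z (z x) = 0
  · -- rank one case : z² = 0
    obtain ⟨y, hy⟩ : ∃ y, z y ≠ 0 := by
      by_contra h
      push_neg at h
      exact hz0 (LinearMap.ext fun x => by simp [h x])
    have hne : B (z y) y ≠ 0 := by
      intro h0
      obtain ⟨v, hv⟩ := hBex (z y) hy
      have hk := key y v
      rw [hz2 y, h0, mul_zero, zero_smul, map_zero] at hk
      simp only [smul_zero, LinearMap.zero_apply, zero_smul, add_zero, zero_add] at hk
      -- hk : (2 * B (z y) v) • z y = 0
      rcases smul_eq_zero.mp hk with h | h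
      · exact hv (by
          rcases mul_eq_zero.mp h with h' | h'
          · exact absurd h' h2
          · exact h')
      · exact hy h
    refine ⟨z y, (B (z y) y)⁻¹, hy, inv_ne_zero hne, ?_⟩
    ext v
    simp only [LinearMap.smul_apply, LinearMap.smulRight_apply]
    have hk := key y v
    rw [hz2 y, map_zero] at hk
    simp only [smul_zero, LinearMap.zero_apply, zero_smul, add_zero, zero_add] at hk
    -- hk : (2 * B (z y) v) • z y = (2 * B (z y) y) • z v
    have h2' : (2 : F) * B (z y) y ≠ 0 := mul_ne_zero h2 hne
    calc z v = ((2 * B (z y) y)⁻¹ * (2 * B (z y) y)) • z v := by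
          rw [inv_mul_cancel₀ h2', one_smul]
      _ = (2 * B (z y) y)⁻¹ • ((2 * B (z y) v) • z y) := by
          rw [mul_smul, hk]
      _ = (B (z y) y)⁻¹ • B (z y) v • z y := by
          rw [smul_smul, smul_smul]
          congr 1
          field_simp
  · -- z² ≠ 0 : derive a contradiction
    push_neg at hz2
    obtain ⟨y₁, hy₁⟩ := hz2
    exfalso
    have : Nontrivial V :=
      Module.nontrivial_of_finrank_pos (R := F) (lt_of_lt_of_le (by norm_num) hdim)
    obtain ⟨a, ha⟩ := Module.End.exists_eigenvalue z
    obtain ⟨e, hev⟩ := ha.exists_hasEigenvector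
    have hze : z e = a • e := hev.apply_eq_smul
    have he0 : e ≠ 0 := hev.2
    -- the eigenvalue must be zero
    have ha0 : a = 0 := by
      by_contra han
      obtain ⟨v, hv⟩ := hBex e he0
      have hzz : z (z e) = (a * a) • e := by
        rw [hze, map_smul, hze, smul_smul]
      have hk := key e v
      rw [hzz, hze] at hk
      simp only [map_smul, LinearMap.smul_apply, smul_eq_mul] at hk
      have hk2 : (4 * (a * a * B e v)) • e = (0 : V) := by
        calc (4 * (a * a * B e v)) • e
            = B e v • (a * a) • e + (2 * (a * B e v)) • a • e + (a * a * B e v) • e := by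
              module
          _ = (2 * (a * B e e)) • z v := hk
          _ = 0 := by rw [hBalt e, mul_zero, mul_zero, zero_smul]
      rcases smul_eq_zero.mp hk2 with h | h
      · have h4 : (4 : F) ≠ 0 := by
          have := mul_ne_zero h2 h2
          norm_num at this ⊢
          exact this
        exact (mul_ne_zero h4 (mul_ne_zero (mul_ne_zero han han) hv)) h
      · exact he0 h
    have hy₀ : z e = 0 := by rw [hze, ha0, zero_smul]
    -- identity (IV)
    have hIV : ∀ x v : V, B e v • z (z x) + B (z (z x)) v • e = 0 := by
      intro x v
      have h1 := key (x + e) v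
      have h2' := key x v
      have hzxe : z (x + e) = z x := by rw [map_add, hy₀, add_zero]
      rw [hzxe] at h1
      have hBze : B (z x) e = 0 := by
        have h := hzsp x e
        rw [hy₀, map_zero] at h
        linear_combination h
      simp only [map_add, LinearMap.add_apply, smul_add, hBze, add_zero] at h1
      linear_combination (norm := module) h1 - h2'
    obtain ⟨v₀, hv₀⟩ := hBex e he0
    have hz3 : ∀ x, z (z (z x)) = 0 := by
      intro x
      have h := hIV x v₀
      have hx : z (z x) = ((B e v₀)⁻¹ * (- B (z (z x)) v₀)) • e := by
        have h' : B e v₀ • z (z x) = (- B (z (z x)) v₀) • e := by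
          linear_combination (norm := module) h
        calc z (z x) = (B e v₀)⁻¹ • (B e v₀ • z (z x)) := by
              rw [smul_smul, inv_mul_cancel₀ hv₀, one_smul]
          _ = _ := by rw [h', smul_smul]
      rw [hx, map_smul, hy₀, smul_zero]
    -- find v₁ with B y₁ v₁ = 0, B (z y₁) v₁ = 0, B (z (z y₁)) v₁ = 1
    by_cases hKer : ∀ v, B y₁ v = 0 → B (z y₁) v = 0 → B (z (z y₁)) v = 0
    · -- then z² y₁ ∈ span {y₁, z y₁}, contradiction
      have hsp : (B (z (z y₁))) ∈ Submodule.span F (Set.range ![B y₁, B (z y₁)]) := by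
        apply mem_span_of_iInf_ker_le_ker (ι := Fin 2)
        intro v hv
        simp only [Submodule.mem_iInf, LinearMap.mem_ker] at hv ⊢
        have h0 := hv 0
        have h1 := hv 1
        simp only [Matrix.cons_val_zero, Matrix.cons_val_one, Matrix.head_cons] at h0 h1
        exact hKer v h0 h1
      rw [Submodule.mem_span_range_iff_exists_fun] at hsp
      obtain ⟨cc, hcc⟩ := hsp
      rw [Fin.sum_univ_two] at hcc
      simp only [Matrix.cons_val_zero, Matrix.cons_val_one, Matrix.head_cons] at hcc
      -- hcc : cc 0 • B y₁ + cc 1 • B (z y₁) = B (z (z y₁))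
      have hv : z (z y₁) = cc 0 • y₁ + cc 1 • z y₁ := by
        have hdiff : ∀ w, B (z (z y₁) - (cc 0 • y₁ + cc 1 • z y₁)) w = 0 := by
          intro w
          have h := LinearMap.congr_fun hcc w
          simp only [LinearMap.add_apply, LinearMap.smul_apply, smul_eq_mul] at h
          simp only [map_sub, map_add, map_smul, LinearMap.sub_apply, LinearMap.add_apply,
            LinearMap.smul_apply, smul_eq_mul]
          linear_combination -h
        exact sub_eq_zero.mp (hBnd.1 _ hdiff)
      have h1 := congrArg (fun t => z (z t)) hv
      simp only [map_add, map_smul] at h1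
      rw [hz3 (z y₁), hz3 y₁, smul_zero, add_zero] at h1
      have hcc0 : cc 0 = 0 := by
        rcases smul_eq_zero.mp h1.symm with h | h
        · exact h
        · exact absurd h hy₁
      rw [hcc0, zero_smul, zero_add] at hv
      have h2'' := congrArg (fun t => z t) hv
      simp only [map_smul] at h2''
      rw [hz3 y₁] at h2''
      rcases smul_eq_zero.mp h2''.symm with h | h
      · rw [h, zero_smul] at hv
        exact hy₁ hv
      · exact hy₁ h
    · push_neg at hKer
      obtain ⟨v, hv0, hv1, hv2⟩ := hKer
      set v₁ : V := (B (z (z y₁)) v)⁻¹ • v with hv₁def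
      have e0 : B y₁ v₁ = 0 := by
        rw [hv₁def, map_smul, smul_eq_mul, hv0, mul_zero]
      have e1 : B (z y₁) v₁ = 0 := by
        rw [hv₁def, map_smul, smul_eq_mul, hv1, mul_zero]
      have e2 : B (z (z y₁)) v₁ = 1 := by
        rw [hv₁def, map_smul, smul_eq_mul, inv_mul_cancel₀ hv2]
      have hk := key y₁ v₁
      rw [e0, e1, e2, zero_smul, mul_zero, zero_smul, one_smul, zero_add, zero_add] at hk
      -- hk : y₁ = (2 * B (z y₁) y₁) • z v₁
      have hfin := congrArg (fun t => z (z t)) hk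
      simp only [map_smul] at hfin
      rw [hz3 v₁, smul_zero] at hfin
      exact hy₁ hfin
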